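/- Let φ ∈ Φ and let E ⊆ 𝕋 be an open subset of the circle written as an at most countable union of pairwise disjoint open arcs with lengths (l_k). If Σ_k l_k·φ(l_k) ≤ M, then there exists a constant A > 0, depending only on M and φ, such that τ(h,E) ≤ A/φ(h) for all h ∈ (0,1]. -/

import Mathlib

open MeasureTheory Set

/-- The `L^p` modulus of continuity `ω(f,t)_p` on the circle `𝕋 = ℝ/ℤ`. -/
noncomputable def modulus (f : AddCircle (1:ℝ) → ℝ) (p t : ℝ) : ℝ :=
  ⨆ h : {h : ℝ // |h| ≤ t},
    (∫ x : AddCircle (1:ℝ), |f (x + ((h.1 : ℝ) : AddCircle (1:ℝ))) - f x| ^ p) ^ (1/p)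

/-- `τ(h,E)`: the measure of the set where the characteristic function of `E`
translated by `h` differs from itself. -/
noncomputable def tau (h : ℝ) (E : Set (AddCircle (1:ℝ))) : ℝ :=
  (volume {x : AddCircle (1:ℝ) |
    E.indicator (fun _ => (1:ℝ)) (x + ((h : ℝ) : AddCircle (1:ℝ)))
      ≠ E.indicator (fun _ => (1:ℝ)) x}).toReal

/-- The open arc of the circle which is the image of the interval `(a, a+l)`. -/
noncomputable def arc (a l : ℝ) : Set (AddCircle (1:ℝ)) :=
  (fun r : ℝ => (r : AddCircle (1:ℝ))) '' Set.Ioo a (a + l)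

/-- The class `Φ`: `φ` is positive and non-increasing on `(0,1]`, and `t ↦ t·φ(t)` is
non-decreasing, concave and bounded on some interval `(0,1/c)` with `c > 1`. -/
def IsPhiClass (φ : ℝ → ℝ) : Prop :=
  (∀ t ∈ Set.Ioc (0:ℝ) 1, 0 < φ t) ∧
  AntitoneOn φ (Set.Ioc 0 1) ∧
  ∃ c > (1:ℝ), MonotoneOn (fun t => t * φ t) (Set.Ioo 0 (1/c)) ∧
    ConcaveOn ℝ (Set.Ioo 0 (1/c)) (fun t => t * φ t) ∧
    BddAbove ((fun t => t * φ t) '' Set.Ioo 0 (1/c))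

instance fact_zero_lt_one_real : Fact ((0:ℝ) < 1) := ⟨one_pos⟩

lemma volume_image_Icc_le (b h : ℝ) (h1 : h ≤ 1) :
    volume ((fun r : ℝ => (r : AddCircle (1:ℝ))) '' Set.Icc b (b + h)) ≤ ENNReal.ofReal h := by
  have hcont : Continuous (fun r : ℝ => (r : AddCircle (1:ℝ))) := AddCircle.continuous_mk' 1
  have hmeas : MeasurableSet ((fun r : ℝ => (r : AddCircle (1:ℝ))) '' Set.Icc b (b + h)) :=
    (isCompact_Icc.image hcont).isClosed.measurableSet
  rw [AddCircle.add_projection_respects_measure (T := 1) b hmeas]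
  have hsub : (QuotientAddGroup.mk ⁻¹' ((fun r : ℝ => (r : AddCircle (1:ℝ))) '' Set.Icc b (b + h))
      ∩ Set.Ioc b (b + 1)) ⊆ Set.Ioc b (b + h) ∪ {b + 1} := by
    rintro x ⟨hx1, hx2⟩
    obtain ⟨y, hy, hyx⟩ := hx1
    have hsub : -y + x ∈ AddSubgroup.zmultiples (1 : ℝ) := QuotientAddGroup.eq.mp hyx
    obtain ⟨n, hn⟩ := AddSubgroup.mem_zmultiples_iff.mp hsub
    rw [zsmul_one] at hn
    have hxy : x = y + (n : ℝ) := by linarith [hn]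
    have hn0 : (0 : ℤ) ≤ n := by
      have h3 : (-1 : ℝ) < (n : ℝ) := by
        have := hy.1; have := hy.2; have := hx2.1; have := hx2.2
        linarith
      have h2 : (-1 : ℤ) < n := by exact_mod_cast h3
      omega
    have hn1 : n ≤ 1 := by
      have : (n : ℝ) ≤ 1 := by have := hy.1; have := hx2.2; linarith
      exact_mod_cast this
    interval_cases n
    · left
      simp only [Int.cast_zero, add_zero] at hxy
      exact ⟨hx2.1, by rw [hxy]; exact hy.2⟩
    · right
      have : b + 1 ≤ x := by push_cast at hxy; linarith [hy.1]
      exact Set.mem_singleton_iff.mpr (le_antisymm hx2.2 this)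
  calc volume (QuotientAddGroup.mk ⁻¹' ((fun r : ℝ => (r : AddCircle (1:ℝ))) '' Set.Icc b (b + h))
      ∩ Set.Ioc b (b + 1)) ≤ volume (Set.Ioc b (b + h) ∪ {b + 1}) := measure_mono hsub
    _ ≤ volume (Set.Ioc b (b + h)) + volume ({b + 1} : Set ℝ) := measure_union_le _ _
    _ = ENNReal.ofReal h := by
        rw [Real.volume_Ioc, Real.volume_singleton, add_zero, add_sub_cancel_left]

lemma volume_sub_le (b d : ℝ) (hd1 : d ≤ 1) (hd0 : 0 ≤ d)
    (s : Set (AddCircle (1:ℝ)))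
    (hs : s ⊆ (fun r : ℝ => (r : AddCircle (1:ℝ))) '' Set.Icc b (b + d)) :
    volume s ≤ ENNReal.ofReal d :=
  le_trans (measure_mono hs) (volume_image_Icc_le b d hd1)

/-- Let `φ ∈ Φ` and `M` be given. There is a constant `A > 0`, depending
only on `M` and `φ`, such that whenever an open `E ⊆ 𝕋` is an at most countable union of
pairwise disjoint open arcs of lengths `l k` with `Σ_k l_k φ(l_k) ≤ M`, one has
`τ(h,E) ≤ A/φ(h)` for all `h ∈ (0,1]`. -/
theorem stmt_10 (φ : ℝ → ℝ) (hφ : IsPhiClass φ) (M : ℝ) :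
    ∃ A > 0, ∀ (ι : Type) (_ : Countable ι) (a l : ι → ℝ) (E : Set (AddCircle (1:ℝ))),
      E = (⋃ k, arc (a k) (l k)) →
      Pairwise (Function.onFun Disjoint (fun k => arc (a k) (l k))) →
      (∀ k, l k ∈ Set.Ioc (0:ℝ) 1) →
      (∑' k, ENNReal.ofReal (l k * φ (l k))) ≤ ENNReal.ofReal M →
      ∀ h ∈ Set.Ioc (0:ℝ) 1, tau h E ≤ A / φ h := by
  obtain ⟨hpos, hanti, c, hc, hmono, -, hbdd⟩ := hφ
  obtain ⟨B, hB⟩ := hbdd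
  have hBapp : ∀ t ∈ Set.Ioo (0:ℝ) (1/c), t * φ t ≤ B := fun t ht => hB ⟨t, ht, rfl⟩
  have hc0 : (0:ℝ) < c := by linarith
  have hc1 : (0:ℝ) < 1/c := by positivity
  have h1c : 1/c < 1 := by rw [div_lt_one hc0]; exact hc
  have hmem1c : 1/c ∈ Set.Ioc (0:ℝ) 1 := ⟨hc1, h1c.le⟩
  have hmem1 : (1:ℝ) ∈ Set.Ioc (0:ℝ) 1 := ⟨one_pos, le_refl 1⟩
  have φ1pos : 0 < φ 1 := hpos 1 hmem1
  have φ1cpos : 0 < φ (1/c) := hpos _ hmem1c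
  set B' : ℝ := max B (φ (1/c)) with hB'def
  have hB'pos : 0 < B' := lt_of_lt_of_le φ1cpos (le_max_right _ _)
  have claim1 : ∀ t ∈ Set.Ioc (0:ℝ) 1, t * φ t ≤ B' := by
    intro t ht
    rcases lt_or_ge t (1/c) with H | H
    · exact le_trans (hBapp t ⟨ht.1, H⟩) (le_max_left _ _)
    · have h1 : φ t ≤ φ (1/c) := hanti hmem1c ht H
      have h2 : 0 ≤ φ t := (hpos t ht).le
      have h3 : t * φ t ≤ 1 * φ (1/c) := mul_le_mul ht.2 h1 h2 zero_le_one
      calc t * φ t ≤ φ (1/c) := by linarith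
        _ ≤ B' := le_max_right _ _
  set K : ℝ := max 1 (B' * c / φ 1) with hKdef
  have hK1 : (1:ℝ) ≤ K := le_max_left _ _
  have hKc : B' * c / φ 1 ≤ K := le_max_right _ _
  set A : ℝ := 2 * K * max M 1 with hAdef
  have hApos : 0 < A := by
    have : (1:ℝ) ≤ max M 1 := le_max_right _ _
    nlinarith
  refine ⟨A, hApos, ?_⟩
  intro ι hι a l E hE hdisj hl hsum h hh
  have hφh : 0 < φ h := hpos h hh
  -- key pointwise inequality
  have claim2 : ∀ k, min (l k) h * φ h ≤ K * (l k * φ (l k)) := by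
    intro k
    have hlk := hl k
    have hlφpos : 0 < l k * φ (l k) := mul_pos hlk.1 (hpos _ hlk)
    rcases le_total (l k) h with H | H
    · rw [min_eq_left H]
      have h1 : φ h ≤ φ (l k) := hanti hlk hh H
      have h2 : l k * φ h ≤ l k * φ (l k) := mul_le_mul_of_nonneg_left h1 hlk.1.le
      nlinarith
    · rw [min_eq_right H]
      rcases lt_or_ge (l k) (1/c) with H2 | H2
      · have h1 : h * φ h ≤ l k * φ (l k) :=
          hmono (Set.mem_Ioo.mpr ⟨hh.1, lt_of_le_of_lt H H2⟩) ⟨hlk.1, H2⟩ H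
        nlinarith
      · have h1 : h * φ h ≤ B' := claim1 h hh
        have h2 : φ 1 ≤ φ (l k) := hanti hlk hmem1 hlk.2
        have h3 : (1/c) * φ 1 ≤ l k * φ (l k) := mul_le_mul H2 h2 φ1pos.le hlk.1.le
        have hq0 : 0 ≤ B' * c / φ 1 := by positivity
        have h4 : (B' * c / φ 1) * ((1/c) * φ 1) ≤ (B' * c / φ 1) * (l k * φ (l k)) :=
          mul_le_mul_of_nonneg_left h3 hq0
        have h5 : (B' * c / φ 1) * ((1/c) * φ 1) = B' := by field_simp
        have h6 : (B' * c / φ 1) * (l k * φ (l k)) ≤ K * (l k * φ (l k)) :=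
          mul_le_mul_of_nonneg_right hKc hlφpos.le
        linarith
  set mkh : AddCircle (1:ℝ) := ((h : ℝ) : AddCircle (1:ℝ)) with hmkh
  set D : ι → Set (AddCircle (1:ℝ)) := fun k =>
    ((fun x => x + mkh) ⁻¹' arc (a k) (l k) \ arc (a k) (l k)) ∪
    (arc (a k) (l k) \ (fun x => x + mkh) ⁻¹' arc (a k) (l k)) with hD
  -- the bad set is covered
  have hcover : {x : AddCircle (1:ℝ) |
      E.indicator (fun _ => (1:ℝ)) (x + mkh) ≠ E.indicator (fun _ => (1:ℝ)) x} ⊆ ⋃ k, D k := by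
    intro x hx
    simp only [Set.mem_setOf_eq] at hx
    by_cases hxE : x ∈ E <;> by_cases hxE' : x + mkh ∈ E
    · exact absurd (by rw [Set.indicator_of_mem hxE, Set.indicator_of_mem hxE']) hx
    · obtain ⟨k, hk⟩ : ∃ k, x ∈ arc (a k) (l k) := by
        rw [hE] at hxE; exact Set.mem_iUnion.mp hxE
      have hk' : x + mkh ∉ arc (a k) (l k) := fun hmem =>
        hxE' (hE ▸ Set.mem_iUnion.mpr ⟨k, hmem⟩)
      exact Set.mem_iUnion.mpr ⟨k, Or.inr ⟨hk, hk'⟩⟩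
    · obtain ⟨k, hk⟩ : ∃ k, x + mkh ∈ arc (a k) (l k) := by
        rw [hE] at hxE'; exact Set.mem_iUnion.mp hxE'
      have hk' : x ∉ arc (a k) (l k) := fun hmem => hxE (hE ▸ Set.mem_iUnion.mpr ⟨k, hmem⟩)
      exact Set.mem_iUnion.mpr ⟨k, Or.inl ⟨hk, hk'⟩⟩
    · exact absurd (by rw [Set.indicator_of_notMem hxE, Set.indicator_of_notMem hxE']) hx
  -- volume of each D k
  have hDk : ∀ k, volume (D k) ≤ ENNReal.ofReal (2 * K / φ h * (l k * φ (l k))) := by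
    intro k
    have hlk := hl k
    set b := a k with hb
    set L := l k with hL
    have hP1 : volume ((fun x => x + mkh) ⁻¹' arc b L \ arc b L) ≤
        ENNReal.ofReal (min L h) := by
      rcases le_total L h with H | H
      · rw [min_eq_left H]
        refine volume_sub_le (b - h) L hlk.2 hlk.1.le _ ?_
        rintro x ⟨hx1, -⟩
        obtain ⟨s, hs, hsx⟩ := hx1
        have hsx' : ((s : ℝ) : AddCircle (1:ℝ)) = x + mkh := hsx
        have hcs : ((s - h : ℝ) : AddCircle (1:ℝ)) = (s : AddCircle (1:ℝ)) - mkh := by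
          rw [hmkh]; push_cast [AddCircle.coe_sub]; ring_nf
        have hxr : ((s - h : ℝ) : AddCircle (1:ℝ)) = x := by rw [hcs, hsx']; abel
        exact ⟨s - h, ⟨by linarith [hs.1], by linarith [hs.2, hh.1]⟩, hxr⟩
      · rw [min_eq_right H]
        refine volume_sub_le (b - h) h hh.2 hh.1.le _ ?_
        rintro x ⟨hx1, hx2⟩
        obtain ⟨s, hs, hsx⟩ := hx1
        have hsx' : ((s : ℝ) : AddCircle (1:ℝ)) = x + mkh := hsx
        have hcs : ((s - h : ℝ) : AddCircle (1:ℝ)) = (s : AddCircle (1:ℝ)) - mkh := by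
          rw [hmkh]; push_cast [AddCircle.coe_sub]; ring_nf
        have hxr : ((s - h : ℝ) : AddCircle (1:ℝ)) = x := by rw [hcs, hsx']; abel
        have hr : s - h ≤ b := by
          by_contra hcon
          push_neg at hcon
          exact hx2 ⟨s - h, ⟨hcon, by linarith [hs.2, hh.1]⟩, hxr⟩
        exact ⟨s - h, ⟨by linarith [hs.1], by linarith⟩, hxr⟩
    have hP2 : volume (arc b L \ (fun x => x + mkh) ⁻¹' arc b L) ≤
        ENNReal.ofReal (min L h) := by
      rcases le_total L h with H | H
      · rw [min_eq_left H]
        refine volume_sub_le b L hlk.2 hlk.1.le _ ?_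
        rintro x ⟨hx1, -⟩
        exact Set.image_mono Set.Ioo_subset_Icc_self hx1
      · rw [min_eq_right H]
        refine volume_sub_le (b + L - h) h hh.2 hh.1.le _ ?_
        rintro x ⟨hx1, hx2⟩
        obtain ⟨r, hr, hrx⟩ := hx1
        have hsh : x + mkh = ((r + h : ℝ) : AddCircle (1:ℝ)) := by
          rw [← hrx, hmkh, AddCircle.coe_add]
        have hge : b + L ≤ r + h := by
          by_contra hcon
          push_neg at hcon
          exact hx2 (by rw [Set.mem_preimage, hsh]; exact ⟨r + h, ⟨by linarith [hr.1, hh.1], hcon⟩, rfl⟩)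
        exact ⟨r, ⟨by linarith, by linarith [hr.2]⟩, hrx⟩
    have hreal : 2 * min L h ≤ 2 * K / φ h * (L * φ L) := by
      have := claim2 k
      rw [div_mul_eq_mul_div, le_div_iff₀ hφh]
      nlinarith
    calc volume (D k) ≤ volume ((fun x => x + mkh) ⁻¹' arc b L \ arc b L) +
        volume (arc b L \ (fun x => x + mkh) ⁻¹' arc b L) := measure_union_le _ _
      _ ≤ ENNReal.ofReal (min L h) + ENNReal.ofReal (min L h) := add_le_add hP1 hP2
      _ = ENNReal.ofReal (2 * min L h) := by
          rw [← ENNReal.ofReal_add (le_min hlk.1.le hh.1.le) (le_min hlk.1.le hh.1.le)]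
          ring_nf
      _ ≤ ENNReal.ofReal (2 * K / φ h * (L * φ L)) := ENNReal.ofReal_le_ofReal hreal
  -- put it together
  have h2K : (0:ℝ) ≤ 2 * K / φ h := by positivity
  have hvolS : volume {x : AddCircle (1:ℝ) |
      E.indicator (fun _ => (1:ℝ)) (x + mkh) ≠ E.indicator (fun _ => (1:ℝ)) x} ≤
      ENNReal.ofReal (A / φ h) := by
    calc volume {x : AddCircle (1:ℝ) |
        E.indicator (fun _ => (1:ℝ)) (x + mkh) ≠ E.indicator (fun _ => (1:ℝ)) x}
        ≤ volume (⋃ k, D k) := measure_mono hcover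
      _ ≤ ∑' k, volume (D k) := measure_iUnion_le _
      _ ≤ ∑' k, ENNReal.ofReal (2 * K / φ h * (l k * φ (l k))) := ENNReal.tsum_le_tsum hDk
      _ = ∑' k, ENNReal.ofReal (2 * K / φ h) * ENNReal.ofReal (l k * φ (l k)) := by
          congr 1; funext k; rw [ENNReal.ofReal_mul h2K]
      _ = ENNReal.ofReal (2 * K / φ h) * ∑' k, ENNReal.ofReal (l k * φ (l k)) :=
          ENNReal.tsum_mul_left
      _ ≤ ENNReal.ofReal (2 * K / φ h) * ENNReal.ofReal (max M 1) := by
          refine mul_le_mul_right (le_trans hsum (ENNReal.ofReal_le_ofReal (le_max_left _ _))) _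
      _ = ENNReal.ofReal (2 * K / φ h * max M 1) := (ENNReal.ofReal_mul h2K).symm
      _ = ENNReal.ofReal (A / φ h) := by rw [hAdef]; ring_nf
  rw [tau]
  exact ENNReal.toReal_le_of_le_ofReal (div_nonneg hApos.le hφh.le) hvolS
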